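/- Let p > 2 be a prime, f(x) = x⁴ + a x² + b x + c ∈ ℤ[x] with p ∤ a, p ∣ b, p ∤ c, and a² ≡ 4c (mod p), and suppose −a/2 is a quadratic residue mod p. Write b = B p^m and a² − 4c = A p^{m'} with p ∤ AB, and set r = min{m, m'}. If m ≠ m' then for any integer s with s² ≡ −a/2 (mod p^{r+1}) one has v_p(f(s)) = r and v_p(f(−s)) = r. -/
import Mathlib

lemma aux16 (p : ℕ) (hp : p.Prime) (hp2 : 2 < p) (a b c A B : ℤ) (m m' : ℕ)
    (ha : ¬ (p : ℤ) ∣ a)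
    (hB : b = B * (p : ℤ) ^ m) (hpB : ¬ (p : ℤ) ∣ B)
    (hA : a ^ 2 - 4 * c = A * (p : ℤ) ^ m') (hpA : ¬ (p : ℤ) ∣ A)
    (r : ℕ) (hr : r = min m m') (hmm : m ≠ m')
    (s : ℤ) (hs : (p : ℤ) ^ (r + 1) ∣ 2 * s ^ 2 + a) :
    (p : ℤ) ^ r ∣ (s ^ 4 + a * s ^ 2 + b * s + c) ∧
      ¬ (p : ℤ) ^ (r + 1) ∣ (s ^ 4 + a * s ^ 2 + b * s + c) := by
  have hpZ : Prime (p : ℤ) := Nat.prime_iff_prime_int.mp hp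
  have hp4 : ¬ (p : ℤ) ∣ 4 := by
    intro h
    have h2 : (p : ℤ) ∣ 2 := by
      have h22 : (p : ℤ) ∣ 2 * 2 := by norm_num at h ⊢; exact_mod_cast h
      rcases hpZ.dvd_mul.mp h22 with h | h <;> exact h
    have := Int.le_of_dvd (by norm_num) h2
    omega
  have hcopr : IsCoprime ((p : ℤ) ^ r) 4 :=
    IsCoprime.pow_left ((hpZ.coprime_iff_not_dvd).mpr hp4)
  have key : 4 * (s ^ 4 + a * s ^ 2 + b * s + c)
      = (2 * s ^ 2 + a) ^ 2 + 4 * b * s - (a ^ 2 - 4 * c) := by ring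
  have hps : ¬ (p : ℤ) ∣ s := by
    intro h
    apply ha
    have h1 : (p : ℤ) ∣ 2 * s ^ 2 + a := dvd_trans (dvd_pow_self _ (by omega)) hs
    have h2 : (p : ℤ) ∣ 2 * s ^ 2 := by
      have : (p : ℤ) ∣ s ^ 2 := by rw [sq]; exact h.mul_right s
      exact this.mul_left 2
    have := dvd_sub h1 h2
    simpa using this
  have hsq2 : (p : ℤ) ^ (r + 1) ∣ (2 * s ^ 2 + a) ^ 2 :=
    dvd_trans hs (dvd_pow_self _ (by omega))
  have hdm : (p : ℤ) ^ r ∣ b := hB ▸ Dvd.dvd.mul_left (pow_dvd_pow _ (by omega)) B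
  have hdm' : (p : ℤ) ^ r ∣ (a ^ 2 - 4 * c) := hA ▸ Dvd.dvd.mul_left (pow_dvd_pow _ (by omega)) A
  constructor
  · have h4 : (p : ℤ) ^ r ∣ 4 * (s ^ 4 + a * s ^ 2 + b * s + c) := by
      rw [key]
      exact dvd_sub (dvd_add (dvd_trans (pow_dvd_pow _ (by omega)) hsq2)
        ((hdm.mul_left 4).mul_right s)) hdm'
    rw [mul_comm] at h4
    exact hcopr.dvd_of_dvd_mul_right h4
  · intro hF
    have h4 : (p : ℤ) ^ (r + 1) ∣ 4 * b * s - (a ^ 2 - 4 * c) := by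
      have hsub : (p : ℤ) ^ (r + 1) ∣ 4 * (s ^ 4 + a * s ^ 2 + b * s + c) - (2 * s ^ 2 + a) ^ 2 :=
        dvd_sub (hF.mul_left 4) hsq2
      have e : 4 * (s ^ 4 + a * s ^ 2 + b * s + c) - (2 * s ^ 2 + a) ^ 2
          = 4 * b * s - (a ^ 2 - 4 * c) := by ring
      rwa [e] at hsub
    rcases Nat.lt_or_ge m m' with hlt | hge
    · have hrm : r = m := by omega
      have hAm : (p : ℤ) ^ (r + 1) ∣ A * (p : ℤ) ^ m' :=
        Dvd.dvd.mul_left (pow_dvd_pow _ (by omega)) A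
      have hbs : (p : ℤ) ^ (r + 1) ∣ 4 * b * s := by
        have := dvd_add h4 (hA ▸ hAm)
        simpa using this
      rw [hB] at hbs
      have e : 4 * (B * (p : ℤ) ^ m) * s = (p : ℤ) ^ m * (4 * B * s) := by ring
      rw [e, hrm, pow_succ] at hbs
      have hpne : ((p : ℤ) ^ m) ≠ 0 := pow_ne_zero _ (by exact_mod_cast hp.ne_zero)
      have hdvd : (p : ℤ) ∣ 4 * B * s := (mul_dvd_mul_iff_left hpne).mp hbs
      rcases hpZ.dvd_mul.mp hdvd with h | h
      · rcases hpZ.dvd_mul.mp h with h | h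
        · exact hp4 h
        · exact hpB h
      · exact hps h
    · have hrm : r = m' := by omega
      have hbm : (p : ℤ) ^ (r + 1) ∣ 4 * b * s := by
        rw [hB]
        have e : 4 * (B * (p : ℤ) ^ m) * s = (p : ℤ) ^ m * (4 * B * s) := by ring
        rw [e]
        exact Dvd.dvd.mul_right (pow_dvd_pow _ (by omega)) _
      have hAm : (p : ℤ) ^ (r + 1) ∣ (p : ℤ) ^ m' * A := by
        have := dvd_sub hbm h4
        rw [hA, mul_comm A] at this
        simpa using this
      rw [hrm, pow_succ] at hAm
      have hpne : ((p : ℤ) ^ m') ≠ 0 := pow_ne_zero _ (by exact_mod_cast hp.ne_zero)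
      exact hpA ((mul_dvd_mul_iff_left hpne).mp hAm)

/-- in case (C1) write b = B·p^m, a² − 4c = A·p^{m'} with p ∤ AB and
r = min{m, m'}.  If m ≠ m', then for any integer s with 2s² ≡ −a (mod p^{r+1})
one has v_p(f(s)) = r and v_p(f(−s)) = r. -/
theorem stmt16 (p : ℕ) (hp : p.Prime) (hp2 : 2 < p) (a b c A B : ℤ) (m m' : ℕ)
    (ha : ¬ (p : ℤ) ∣ a) (hb : (p : ℤ) ∣ b) (hc : ¬ (p : ℤ) ∣ c)
    (hsq : (a : ZMod p) ^ 2 = 4 * (c : ZMod p))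
    (hres : ∃ u : ZMod p, 2 * u ^ 2 = -(a : ZMod p))
    (hB : b = B * (p : ℤ) ^ m) (hpB : ¬ (p : ℤ) ∣ B)
    (hA : a ^ 2 - 4 * c = A * (p : ℤ) ^ m') (hpA : ¬ (p : ℤ) ∣ A)
    (r : ℕ) (hr : r = min m m') (hmm : m ≠ m')
    (s : ℤ) (hs : (p : ℤ) ^ (r + 1) ∣ 2 * s ^ 2 + a) :
    ((p : ℤ) ^ r ∣ (s ^ 4 + a * s ^ 2 + b * s + c) ∧
      ¬ (p : ℤ) ^ (r + 1) ∣ (s ^ 4 + a * s ^ 2 + b * s + c)) ∧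
    ((p : ℤ) ^ r ∣ (s ^ 4 + a * s ^ 2 - b * s + c) ∧
      ¬ (p : ℤ) ^ (r + 1) ∣ (s ^ 4 + a * s ^ 2 - b * s + c)) := by
  constructor
  · exact aux16 p hp hp2 a b c A B m m' ha hB hpB hA hpA r hr hmm s hs
  · have hB' : -b = (-B) * (p : ℤ) ^ m := by rw [hB]; ring
    have hpB' : ¬ (p : ℤ) ∣ (-B) := fun h => hpB ((dvd_neg).mp h)
    have := aux16 p hp hp2 a (-b) c A (-B) m m' ha hB' hpB' hA hpA r hr hmm s hs
    convert this using 3 <;> ring
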